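/- Let d ≥ 1, σ ∈ (0,1), τ > 0, m ≥ 0. There is a constant C, depending only on d, σ, τ, m, with the following property. Let f, w : ℝ^d → ℂ be measurable functions such that the functions ξ ↦ e^{τ⟨ξ⟩^σ}⟨ξ⟩^m f(ξ), ξ ↦ e^{τ⟨ξ⟩^σ} f(ξ), ξ ↦ ⟨ξ⟩^m w(ξ), and w itself all belong to L²(ℝ^d). Then the function g defined by g(ξ) = ∫_{ℝ^d} e^{τ⟨ξ⟩^σ − τ⟨η⟩^σ} f(ξ − η) w(η) dη satisfies ‖⟨·⟩^m g‖_{L²} ≤ C · ( ‖e^{τ⟨·⟩^σ}⟨·⟩^m f‖_{L²} · ‖w‖_{L²} + ‖e^{τ⟨·⟩^σ} f‖_{L²} · ‖⟨·⟩^m w‖_{L²} ). -/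

import Mathlib

open MeasureTheory Real
open scoped FourierTransform ENNReal

noncomputable section

/-- `ℝ^d` as a Euclidean space. -/
abbrev E (d : ℕ) := EuclideanSpace ℝ (Fin d)

/-- The Japanese bracket `⟨ξ⟩ = (1 + |ξ|²)^{1/2}`. -/
def jap {d : ℕ} (ξ : E d) : ℝ := Real.sqrt (1 + ‖ξ‖ ^ 2)

namespace Stmt7


variable {d : ℕ}

lemma one_le_jap (ξ : E d) : 1 ≤ jap ξ := by
  have h := Real.sqrt_le_sqrt (show (1:ℝ) ≤ 1 + ‖ξ‖ ^ 2 by nlinarith [sq_nonneg ‖ξ‖])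
  rwa [Real.sqrt_one] at h

lemma jap_pos (ξ : E d) : 0 < jap ξ := lt_of_lt_of_le one_pos (one_le_jap ξ)

lemma jap_nonneg (ξ : E d) : 0 ≤ jap ξ := (jap_pos ξ).le

lemma sq_jap (ξ : E d) : jap ξ ^ 2 = 1 + ‖ξ‖ ^ 2 :=
  Real.sq_sqrt (by positivity)

lemma norm_le_jap (ξ : E d) : ‖ξ‖ ≤ jap ξ := by
  have h := Real.sqrt_le_sqrt (show ‖ξ‖ ^ 2 ≤ 1 + ‖ξ‖ ^ 2 by nlinarith)
  rwa [Real.sqrt_sq (norm_nonneg _)] at h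

lemma jap_triangle (a b : E d) : jap (a + b) ≤ jap a + jap b := by
  have h1 : ‖a + b‖ ≤ ‖a‖ + ‖b‖ := norm_add_le a b
  have h2 : ‖a‖ ≤ jap a := norm_le_jap a
  have h3 : ‖b‖ ≤ jap b := norm_le_jap b
  have h4 := sq_jap a; have h5 := sq_jap b
  have h6 : jap (a + b) = Real.sqrt (1 + ‖a + b‖ ^ 2) := rfl
  rw [h6, show jap a + jap b = Real.sqrt ((jap a + jap b) ^ 2) by
      rw [Real.sqrt_sq (add_nonneg (jap_nonneg a) (jap_nonneg b))]]
  exact Real.sqrt_le_sqrt (by nlinarith [norm_nonneg a, norm_nonneg b, jap_nonneg a, jap_nonneg b, norm_nonneg (a+b)])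

lemma continuous_jap : Continuous (jap (d := d)) :=
  (continuous_const.add ((continuous_norm).pow 2)).sqrt

lemma measurable_jap : Measurable (jap (d := d)) := continuous_jap.measurable

/-- four point concavity inequality for `x ^ σ`. -/
lemma concave_four {σ : ℝ} (hσ0 : 0 < σ) (hσ1 : σ < 1) {μ M : ℝ} (hμ : 0 < μ) (hμM : μ ≤ M) :
    (M + μ) ^ σ + μ ^ σ ≤ M ^ σ + (2 * μ) ^ σ := by
  have hM : 0 < M := lt_of_lt_of_le hμ hμM
  have hc := Real.concaveOn_rpow hσ0.le hσ1.le
  have hmemμ : μ ∈ Set.Ici (0:ℝ) := le_of_lt hμ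
  have hmemMμ : M + μ ∈ Set.Ici (0:ℝ) := by simp only [Set.mem_Ici]; linarith
  have ha : (0:ℝ) ≤ (M - μ) / M := div_nonneg (by linarith) hM.le
  have hb : (0:ℝ) ≤ μ / M := by positivity
  have hab : (M - μ) / M + μ / M = 1 := by field_simp; ring
  have hab' : μ / M + (M - μ) / M = 1 := by field_simp; ring
  have h1 := hc.2 hmemμ hmemMμ ha hb hab
  have h2 := hc.2 hmemμ hmemMμ hb ha hab'
  rw [smul_eq_mul, smul_eq_mul, smul_eq_mul, smul_eq_mul] at h1 h2
  have e1 : (M - μ) / M * μ + μ / M * (M + μ) = 2 * μ := by field_simp; ring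
  have e2 : μ / M * μ + (M - μ) / M * (M + μ) = M := by field_simp; ring
  rw [e1] at h1; rw [e2] at h2
  have hsum : ((M - μ) / M + μ / M) * (μ ^ σ) + (μ / M + (M - μ) / M) * ((M + μ) ^ σ)
      ≤ (2 * μ) ^ σ + M ^ σ := by linarith
  rw [hab, hab'] at hsum; linarith

/-- key sub-additivity with gain. -/
lemma key_rpow {σ : ℝ} (hσ0 : 0 < σ) (hσ1 : σ < 1) {S A B : ℝ}
    (hA : 1 ≤ A) (hB : 1 ≤ B) (hS : 0 ≤ S) (hSAB : S ≤ A + B) :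
    S ^ σ ≤ A ^ σ + B ^ σ - (2 - 2 ^ σ) * (min A B) ^ σ := by
  rcases le_total A B with h | h
  · have hm : min A B = A := min_eq_left h
    have h1 : S ^ σ ≤ (B + A) ^ σ := by
      rw [show B + A = A + B by ring]
      exact Real.rpow_le_rpow hS hSAB hσ0.le
    have h2 := concave_four hσ0 hσ1 (lt_of_lt_of_le one_pos hA) h
    have h3 : (2 * A) ^ σ = 2 ^ σ * A ^ σ :=
      Real.mul_rpow (by norm_num) (by linarith)
    rw [hm]; nlinarith
  · have hm : min A B = B := min_eq_right h
    have h1 : S ^ σ ≤ (A + B) ^ σ := Real.rpow_le_rpow hS hSAB hσ0.le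
    have h2 := concave_four hσ0 hσ1 (lt_of_lt_of_le one_pos hB) h
    have h3 : (2 * B) ^ σ = 2 ^ σ * B ^ σ :=
      Real.mul_rpow (by norm_num) (by linarith)
    rw [hm]; nlinarith



/-- polynomial beaten by stretched exponential -/
lemma poly_le_exp {σ ε : ℝ} (hσ0 : 0 < σ) (hε : 0 < ε) (k : ℝ) :
    ∃ C : ℝ, 0 < C ∧ ∀ u : ℝ, 1 ≤ u → u ^ k ≤ C * Real.exp (ε * u ^ σ) := by
  obtain ⟨n, hn⟩ : ∃ n : ℕ, k / σ ≤ n := exists_nat_ge (k / σ)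
  refine ⟨n.factorial / ε ^ n, by positivity, fun u hu => ?_⟩
  have hu0 : (0:ℝ) < u := lt_of_lt_of_le one_pos hu
  have huσ : 1 ≤ u ^ σ := Real.one_le_rpow hu hσ0.le
  have h1 : u ^ k ≤ u ^ (σ * n) := by
    apply Real.rpow_le_rpow_of_exponent_le hu
    rw [mul_comm]
    calc k = k / σ * σ := by field_simp
    _ ≤ n * σ := by apply mul_le_mul_of_nonneg_right hn hσ0.le
  have h2 : u ^ (σ * (n:ℝ)) = (u ^ σ) ^ n := by
    rw [Real.rpow_mul hu0.le, Real.rpow_natCast]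
  have hv : 0 ≤ ε * u ^ σ := by positivity
  have h3 : (ε * u ^ σ) ^ n / n.factorial ≤ Real.exp (ε * u ^ σ) := by
    calc (ε * u ^ σ) ^ n / n.factorial
        ≤ ∑ i ∈ Finset.range (n+1), (ε * u ^ σ) ^ i / i.factorial := by
          apply Finset.single_le_sum (f := fun i => (ε * u ^ σ) ^ i / (i.factorial:ℝ))
            (fun i _ => by positivity) (Finset.self_mem_range_succ n)
    _ ≤ Real.exp (ε * u ^ σ) := Real.sum_le_exp_of_nonneg hv _
  have h4 : (u ^ σ) ^ n = (ε * u ^ σ) ^ n / ε ^ n := by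
    rw [mul_pow]; field_simp
  calc u ^ k ≤ (u ^ σ) ^ n := by rw [← h2]; exact h1
  _ = (n.factorial / ε ^ n) * ((ε * u ^ σ) ^ n / n.factorial) := by
      rw [h4]; field_simp
  _ ≤ (n.factorial / ε ^ n) * Real.exp (ε * u ^ σ) := by
      apply mul_le_mul_of_nonneg_left h3 (by positivity)

/-- kernel inequality -/
lemma kernel_ineq {σ τ m : ℝ} (hσ0 : 0 < σ) (hσ1 : σ < 1) (hτ : 0 < τ) (hm : 0 ≤ m)
    {S A B : ℝ} (hA : 1 ≤ A) (hB : 1 ≤ B) (hS : 1 ≤ S) (hSAB : S ≤ A + B) :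
    S ^ m * Real.exp (τ * S ^ σ - τ * B ^ σ) ≤
      (2:ℝ) ^ m * (A ^ m * (Real.exp (τ * A ^ σ) * Real.exp (-(τ * (2 - 2 ^ σ) * A ^ σ)))
        + A ^ m * Real.exp (τ * A ^ σ) * Real.exp (-(τ * (2 - 2 ^ σ) * B ^ σ))
        + Real.exp (τ * A ^ σ) * Real.exp (-(τ * (2 - 2 ^ σ) * A ^ σ)) * B ^ m
        + Real.exp (τ * A ^ σ) * (B ^ m * Real.exp (-(τ * (2 - 2 ^ σ) * B ^ σ)))) := by
  set c : ℝ := τ * (2 - 2 ^ σ) with hc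
  have hS0 : 0 ≤ S := by linarith
  have hA0 : 0 < A := by linarith
  have hB0 : 0 < B := by linarith
  -- exponential bound
  have hkey := key_rpow hσ0 hσ1 hA hB hS0 hSAB
  have hexp1 : Real.exp (τ * S ^ σ - τ * B ^ σ) ≤
      Real.exp (τ * A ^ σ) * Real.exp (-(c * (min A B) ^ σ)) := by
    rw [← Real.exp_add]
    apply Real.exp_le_exp.mpr
    have h := mul_le_mul_of_nonneg_left hkey hτ.le
    rw [hc]
    nlinarith [h]
  have hexp2 : Real.exp (-(c * (min A B) ^ σ)) ≤
      Real.exp (-(c * A ^ σ)) + Real.exp (-(c * B ^ σ)) := by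
    rcases min_cases A B with ⟨h1, _⟩ | ⟨h1, _⟩ <;> rw [h1] <;>
      nlinarith [Real.exp_pos (-(c * A ^ σ)), Real.exp_pos (-(c * B ^ σ))]
  -- power bound
  have hpow : S ^ m ≤ (2:ℝ) ^ m * (A ^ m + B ^ m) := by
    have h1 : S ^ m ≤ (A + B) ^ m := Real.rpow_le_rpow hS0 hSAB hm
    have h2 : (A + B) ^ m ≤ (2 * max A B) ^ m := by
      apply Real.rpow_le_rpow (by linarith) _ hm
      rcases le_total A B with h | h
      · rw [max_eq_right h]; linarith
      · rw [max_eq_left h]; linarith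
    have h3 : (2 * max A B) ^ m = 2 ^ m * (max A B) ^ m :=
      Real.mul_rpow (by norm_num) (by rcases le_total A B with h|h <;> simp [max_eq_right, max_eq_left, h] <;> linarith)
    have h4 : (max A B) ^ m ≤ A ^ m + B ^ m := by
      rcases le_total A B with h | h
      · rw [max_eq_right h]
        nlinarith [Real.rpow_nonneg hA0.le m, Real.rpow_nonneg hB0.le m]
      · rw [max_eq_left h]
        nlinarith [Real.rpow_nonneg hA0.le m, Real.rpow_nonneg hB0.le m]
    calc S ^ m ≤ (2 * max A B) ^ m := h1.trans h2
    _ = 2 ^ m * (max A B) ^ m := h3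
    _ ≤ 2 ^ m * (A ^ m + B ^ m) := by
        apply mul_le_mul_of_nonneg_left h4 (Real.rpow_nonneg (by norm_num) m)
  have hAm : 0 ≤ A ^ m := Real.rpow_nonneg hA0.le m
  have hBm : 0 ≤ B ^ m := Real.rpow_nonneg hB0.le m
  have h2m : (0:ℝ) ≤ 2 ^ m := Real.rpow_nonneg (by norm_num) m
  have hSm : 0 ≤ S ^ m := Real.rpow_nonneg hS0 m
  calc S ^ m * Real.exp (τ * S ^ σ - τ * B ^ σ)
      ≤ ((2:ℝ) ^ m * (A ^ m + B ^ m)) *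
        (Real.exp (τ * A ^ σ) * (Real.exp (-(c * A ^ σ)) + Real.exp (-(c * B ^ σ)))) := by
        apply mul_le_mul hpow _ (Real.exp_pos _).le (by positivity)
        calc Real.exp (τ * S ^ σ - τ * B ^ σ)
            ≤ Real.exp (τ * A ^ σ) * Real.exp (-(c * (min A B) ^ σ)) := hexp1
        _ ≤ Real.exp (τ * A ^ σ) * (Real.exp (-(c * A ^ σ)) + Real.exp (-(c * B ^ σ))) :=
            mul_le_mul_of_nonneg_left hexp2 (Real.exp_pos _).le
  _ = (2:ℝ) ^ m * (A ^ m * (Real.exp (τ * A ^ σ) * Real.exp (-(c * A ^ σ)))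
        + A ^ m * Real.exp (τ * A ^ σ) * Real.exp (-(c * B ^ σ))
        + Real.exp (τ * A ^ σ) * Real.exp (-(c * A ^ σ)) * B ^ m
        + Real.exp (τ * A ^ σ) * (B ^ m * Real.exp (-(c * B ^ σ)))) := by ring


lemma conj22 : Real.HolderConjugate 2 2 := by constructor <;> norm_num

lemma sq_half (x : ℝ≥0∞) : (x ^ (1/2:ℝ)) ^ (2:ℝ) = x := by
  rw [← ENNReal.rpow_mul]; norm_num

lemma half_sq (x : ℝ≥0∞) : (x ^ (2:ℝ)) ^ (1/2:ℝ) = x := by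
  rw [← ENNReal.rpow_mul]; norm_num

lemma young {d : ℕ} (F G : E d → ℝ≥0∞) (hF : Measurable F) (hG : Measurable G) :
    (∫⁻ ξ, (∫⁻ η, F (ξ - η) * G η) ^ (2:ℝ)) ^ (1/2:ℝ) ≤
      (∫⁻ ζ, F ζ) * (∫⁻ η, (G η) ^ (2:ℝ)) ^ (1/2:ℝ) := by
  set I : ℝ≥0∞ := ∫⁻ ζ, F ζ with hI
  have hFξ : ∀ ξ : E d, Measurable fun η => F (ξ - η) :=
    fun ξ => hF.comp (measurable_const.sub measurable_id)
  have htrans : ∀ ξ : E d, ∫⁻ η, F (ξ - η) = I :=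
    fun ξ => (Measure.measurePreserving_sub_left volume ξ).lintegral_comp hF
  have htrans' : ∀ η : E d, ∫⁻ ξ, F (ξ - η) = I :=
    fun η => (measurePreserving_sub_right volume η).lintegral_comp hF
  -- pointwise Cauchy-Schwarz
  have step1 : ∀ ξ : E d, (∫⁻ η, F (ξ - η) * G η) ^ (2:ℝ) ≤
      I * ∫⁻ η, F (ξ - η) * (G η) ^ (2:ℝ) := by
    intro ξ
    have hfg : ∀ η : E d, F (ξ - η) * G η =
        ((fun η => (F (ξ - η)) ^ (1/2:ℝ)) * fun η => (F (ξ - η)) ^ (1/2:ℝ) * G η) η := by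
      intro η
      simp only [Pi.mul_apply]
      rw [← mul_assoc, ← ENNReal.rpow_add_of_nonneg (1/2) (1/2) (by norm_num) (by norm_num)]
      norm_num
    have hcs := ENNReal.lintegral_mul_le_Lp_mul_Lq volume conj22
      ((hFξ ξ).pow_const (1/2:ℝ)).aemeasurable
      (((hFξ ξ).pow_const (1/2:ℝ)).mul hG).aemeasurable
    simp only [Pi.mul_apply] at hcs
    have e1 : ∀ η : E d, ((F (ξ - η)) ^ (1/2:ℝ)) ^ (2:ℝ) = F (ξ - η) := fun η => sq_half _
    have e2 : ∀ η : E d, ((F (ξ - η)) ^ (1/2:ℝ) * G η) ^ (2:ℝ) = F (ξ - η) * (G η) ^ (2:ℝ) := by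
      intro η; rw [ENNReal.mul_rpow_of_nonneg _ _ (by norm_num : (0:ℝ) ≤ 2), sq_half]
    calc (∫⁻ η, F (ξ - η) * G η) ^ (2:ℝ)
        = (∫⁻ η, (F (ξ - η)) ^ (1/2:ℝ) * ((F (ξ - η)) ^ (1/2:ℝ) * G η)) ^ (2:ℝ) := by
          congr 1; apply lintegral_congr; intro η; rw [hfg η]; simp [mul_assoc]
    _ ≤ ((∫⁻ η, ((F (ξ - η)) ^ (1/2:ℝ)) ^ (2:ℝ)) ^ (1/2:ℝ) *
          (∫⁻ η, ((F (ξ - η)) ^ (1/2:ℝ) * G η) ^ (2:ℝ)) ^ (1/2:ℝ)) ^ (2:ℝ) := by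
          apply ENNReal.rpow_le_rpow _ (by norm_num : (0:ℝ) ≤ 2)
          exact hcs
    _ = (∫⁻ η, F (ξ - η)) * ∫⁻ η, F (ξ - η) * (G η) ^ (2:ℝ) := by
          rw [ENNReal.mul_rpow_of_nonneg _ _ (by norm_num : (0:ℝ) ≤ 2)]
          simp_rw [e1, e2]
          rw [sq_half, sq_half]
    _ = I * ∫⁻ η, F (ξ - η) * (G η) ^ (2:ℝ) := by rw [htrans ξ]
  have hmeas2 : Measurable (Function.uncurry fun (ξ η : E d) => F (ξ - η) * (G η) ^ (2:ℝ)) := by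
    apply Measurable.mul
    · exact hF.comp (measurable_fst.sub measurable_snd)
    · exact (hG.comp measurable_snd).pow_const _
  have step2 : ∫⁻ ξ, (∫⁻ η, F (ξ - η) * G η) ^ (2:ℝ) ≤
      I ^ (2:ℝ) * ∫⁻ η, (G η) ^ (2:ℝ) := by
    calc ∫⁻ ξ, (∫⁻ η, F (ξ - η) * G η) ^ (2:ℝ)
        ≤ ∫⁻ ξ, I * ∫⁻ η, F (ξ - η) * (G η) ^ (2:ℝ) := lintegral_mono step1
    _ = I * ∫⁻ ξ, ∫⁻ η, F (ξ - η) * (G η) ^ (2:ℝ) :=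
        lintegral_const_mul I hmeas2.lintegral_prod_right
    _ = I * ∫⁻ η, ∫⁻ ξ, F (ξ - η) * (G η) ^ (2:ℝ) := by
        rw [lintegral_lintegral_swap hmeas2.aemeasurable]
    _ = I * ∫⁻ η, (∫⁻ ξ, F (ξ - η)) * (G η) ^ (2:ℝ) := by
        congr 1; apply lintegral_congr; intro η
        have hm : Measurable fun ξ : E d => F (ξ - η) :=
          hF.comp (measurable_id.sub measurable_const)
        rw [lintegral_mul_const _ hm]
    _ = I * ∫⁻ η, I * (G η) ^ (2:ℝ) := by simp_rw [htrans']
    _ = I ^ (2:ℝ) * ∫⁻ η, (G η) ^ (2:ℝ) := by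
        rw [lintegral_const_mul I ((hG.pow_const _))]
        rw [show I ^ (2:ℝ) = I * I by
          rw [show (2:ℝ) = 1 + 1 by norm_num, ENNReal.rpow_add_of_nonneg 1 1 zero_le_one zero_le_one,
            ENNReal.rpow_one], mul_assoc]
  calc (∫⁻ ξ, (∫⁻ η, F (ξ - η) * G η) ^ (2:ℝ)) ^ (1/2:ℝ)
      ≤ (I ^ (2:ℝ) * ∫⁻ η, (G η) ^ (2:ℝ)) ^ (1/2:ℝ) :=
        ENNReal.rpow_le_rpow step2 (by norm_num)
  _ = I * (∫⁻ η, (G η) ^ (2:ℝ)) ^ (1/2:ℝ) := by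
      rw [ENNReal.mul_rpow_of_nonneg _ _ (by norm_num : (0:ℝ) ≤ 1/2), half_sq]

lemma young' {d : ℕ} (F G : E d → ℝ≥0∞) (hF : Measurable F) (hG : Measurable G) :
    (∫⁻ ξ, (∫⁻ η, F (ξ - η) * G η) ^ (2:ℝ)) ^ (1/2:ℝ) ≤
      (∫⁻ ζ, (F ζ) ^ (2:ℝ)) ^ (1/2:ℝ) * ∫⁻ η, G η := by
  have hswap : ∀ ξ : E d, ∫⁻ η, F (ξ - η) * G η = ∫⁻ η, G (ξ - η) * F η := by
    intro ξ
    have h := (Measure.measurePreserving_sub_left volume ξ).lintegral_comp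
      (f := fun η => F η * G (ξ - η)) (hF.mul (hG.comp (measurable_const.sub measurable_id)))
    calc ∫⁻ η, F (ξ - η) * G η = ∫⁻ η, F (ξ - η) * G (ξ - (ξ - η)) := by
          simp [sub_sub_cancel]
    _ = ∫⁻ η, F η * G (ξ - η) := h
    _ = ∫⁻ η, G (ξ - η) * F η := by simp_rw [mul_comm]
  calc (∫⁻ ξ, (∫⁻ η, F (ξ - η) * G η) ^ (2:ℝ)) ^ (1/2:ℝ)
      = (∫⁻ ξ, (∫⁻ η, G (ξ - η) * F η) ^ (2:ℝ)) ^ (1/2:ℝ) := by simp_rw [hswap]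
  _ ≤ (∫⁻ ζ, G ζ) * (∫⁻ η, (F η) ^ (2:ℝ)) ^ (1/2:ℝ) := young G F hG hF
  _ = (∫⁻ ζ, (F ζ) ^ (2:ℝ)) ^ (1/2:ℝ) * ∫⁻ η, G η := mul_comm _ _


lemma decay_sq_finite {d : ℕ} {σ m c : ℝ} (hσ0 : 0 < σ) (hm : 0 ≤ m) (hc : 0 < c) :
    ∫⁻ ζ : E d, (ENNReal.ofReal (jap ζ ^ m * Real.exp (-(c * jap ζ ^ σ)))) ^ (2:ℝ) < ⊤ := by
  set r : ℝ := (d : ℝ) + 1 with hr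
  have hr0 : 0 < r := by positivity
  obtain ⟨C₀, hC₀, hpoly⟩ := poly_le_exp hσ0 (show (0:ℝ) < 2 * c by linarith) (2 * m + r)
  have h2r : (0:ℝ) < 2 ^ r := Real.rpow_pos_of_pos (by norm_num) r
  -- pointwise bound
  have hpt : ∀ ζ : E d, (ENNReal.ofReal (jap ζ ^ m * Real.exp (-(c * jap ζ ^ σ)))) ^ (2:ℝ)
      ≤ ENNReal.ofReal (C₀ * 2 ^ r * (1 + ‖ζ‖) ^ (-r)) := by
    intro ζ
    have hJ1 : 1 ≤ jap ζ := one_le_jap ζ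
    have hJ0 : 0 < jap ζ := jap_pos ζ
    have hx : (0:ℝ) ≤ jap ζ ^ m * Real.exp (-(c * jap ζ ^ σ)) := by positivity
    rw [ENNReal.ofReal_rpow_of_nonneg hx (by norm_num)]
    apply ENNReal.ofReal_le_ofReal
    have e1 : (jap ζ ^ m * Real.exp (-(c * jap ζ ^ σ))) ^ (2:ℝ)
        = jap ζ ^ (2 * m) * Real.exp (-(2 * c * jap ζ ^ σ)) := by
      rw [show (2:ℝ) = ((2:ℕ):ℝ) by norm_num, Real.rpow_natCast, mul_pow]
      congr 1
      · rw [← Real.rpow_natCast (jap ζ ^ m) 2, ← Real.rpow_mul hJ0.le]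
        norm_num [mul_comm]
      · rw [← Real.exp_nat_mul]
        congr 1; push_cast; ring
    rw [e1]
    set J := jap ζ
    set b := J ^ r with hbdef
    have hb : 0 < b := Real.rpow_pos_of_pos hJ0 r
    set Ex := Real.exp (2 * c * J ^ σ) with hEdef
    have hE : 0 < Ex := Real.exp_pos _
    have hp : J ^ (2 * m) * b ≤ C₀ * Ex := by
      have := hpoly J hJ1
      rwa [Real.rpow_add hJ0] at this
    have hP : (0:ℝ) < (1 + ‖ζ‖) ^ r := Real.rpow_pos_of_pos (by positivity) r
    have hPb : (1 + ‖ζ‖) ^ r ≤ 2 ^ r * b := by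
      have h1 : (1:ℝ) + ‖ζ‖ ≤ 2 * J := by
        have := norm_le_jap ζ; linarith
      calc (1 + ‖ζ‖) ^ r ≤ (2 * J) ^ r := Real.rpow_le_rpow (by positivity) h1 hr0.le
      _ = 2 ^ r * b := Real.mul_rpow (by norm_num) hJ0.le
    have ha : (0:ℝ) ≤ J ^ (2 * m) := Real.rpow_nonneg hJ0.le _
    rw [Real.exp_neg, ← div_eq_mul_inv, Real.rpow_neg (by positivity : (0:ℝ) ≤ 1 + ‖ζ‖),
      ← div_eq_mul_inv]
    rw [div_le_div_iff₀ hE hP]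
    nlinarith [mul_le_mul_of_nonneg_left hPb ha, mul_le_mul_of_nonneg_left hp h2r.le]
  calc ∫⁻ ζ : E d, (ENNReal.ofReal (jap ζ ^ m * Real.exp (-(c * jap ζ ^ σ)))) ^ (2:ℝ)
      ≤ ∫⁻ ζ : E d, ENNReal.ofReal (C₀ * 2 ^ r * (1 + ‖ζ‖) ^ (-r)) := lintegral_mono hpt
  _ = ENNReal.ofReal (C₀ * 2 ^ r) * ∫⁻ ζ : E d, ENNReal.ofReal ((1 + ‖ζ‖) ^ (-r)) := by
      rw [← lintegral_const_mul' _ _ ENNReal.ofReal_ne_top]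
      apply lintegral_congr; intro ζ
      rw [← ENNReal.ofReal_mul (by positivity)]
  _ < ⊤ := by
      apply ENNReal.mul_lt_top ENNReal.ofReal_lt_top
      apply finite_integral_one_add_norm
      rw [finrank_euclideanSpace_fin]
      simp [hr]

def nu {d : ℕ} (u : E d → ℝ≥0∞) : ℝ≥0∞ := (∫⁻ ξ, u ξ ^ (2:ℝ)) ^ (1/2:ℝ)

lemma nu_mono {d : ℕ} {u v : E d → ℝ≥0∞} (h : ∀ x, u x ≤ v x) : nu u ≤ nu v :=
  ENNReal.rpow_le_rpow
    (lintegral_mono fun x => ENNReal.rpow_le_rpow (h x) (by norm_num)) (by norm_num)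

lemma nu_congr {d : ℕ} {u v : E d → ℝ≥0∞} (h : ∀ x, u x = v x) : nu u = nu v :=
  le_antisymm (nu_mono fun x => (h x).le) (nu_mono fun x => (h x).ge)

lemma nu_const_mul {d : ℕ} (a : ℝ≥0∞) (ha : a ≠ ⊤) (u : E d → ℝ≥0∞) :
    nu (fun x => a * u x) = a * nu u := by
  unfold nu
  simp_rw [ENNReal.mul_rpow_of_nonneg _ _ (by norm_num : (0:ℝ) ≤ 2)]
  rw [lintegral_const_mul' _ _ (by
    simp only [ne_eq, ENNReal.rpow_eq_top_iff, not_or, not_and, not_lt]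
    exact ⟨fun _ => by norm_num, fun h => absurd h ha⟩)]
  rw [ENNReal.mul_rpow_of_nonneg _ _ (by norm_num : (0:ℝ) ≤ 1/2), half_sq]

lemma nu_add4 {d : ℕ} {h1 h2 h3 h4 : E d → ℝ≥0∞}
    (m1 : Measurable h1) (m2 : Measurable h2) (m3 : Measurable h3) (m4 : Measurable h4) :
    nu (fun x => h1 x + h2 x + h3 x + h4 x) ≤ nu h1 + nu h2 + nu h3 + nu h4 := by
  have hone : (1:ℝ) ≤ 2 := one_le_two
  have A := ENNReal.lintegral_Lp_add_le (μ := volume)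
    (((m1.add m2).add m3).aemeasurable) m4.aemeasurable hone
  have B := ENNReal.lintegral_Lp_add_le (μ := volume)
    ((m1.add m2).aemeasurable) m3.aemeasurable hone
  have C := ENNReal.lintegral_Lp_add_le (μ := volume)
    (m1.aemeasurable) m2.aemeasurable hone
  simp only [Pi.add_apply] at A B C
  unfold nu
  calc (∫⁻ x, (h1 x + h2 x + h3 x + h4 x) ^ (2:ℝ)) ^ (1/2:ℝ)
      ≤ (∫⁻ x, (h1 x + h2 x + h3 x) ^ (2:ℝ)) ^ (1/2:ℝ) + (∫⁻ x, h4 x ^ (2:ℝ)) ^ (1/2:ℝ) := A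
  _ ≤ ((∫⁻ x, (h1 x + h2 x) ^ (2:ℝ)) ^ (1/2:ℝ) + (∫⁻ x, h3 x ^ (2:ℝ)) ^ (1/2:ℝ))
        + (∫⁻ x, h4 x ^ (2:ℝ)) ^ (1/2:ℝ) := add_le_add_left B _
  _ ≤ (((∫⁻ x, h1 x ^ (2:ℝ)) ^ (1/2:ℝ) + (∫⁻ x, h2 x ^ (2:ℝ)) ^ (1/2:ℝ))
        + (∫⁻ x, h3 x ^ (2:ℝ)) ^ (1/2:ℝ)) + (∫⁻ x, h4 x ^ (2:ℝ)) ^ (1/2:ℝ) := by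
      exact add_le_add_left (add_le_add_left C _) _

lemma cs {d : ℕ} {u v : E d → ℝ≥0∞} (hu : Measurable u) (hv : Measurable v) :
    ∫⁻ x, u x * v x ≤ nu u * nu v := by
  have := ENNReal.lintegral_mul_le_Lp_mul_Lq volume conj22 hu.aemeasurable hv.aemeasurable
  simpa [nu, Pi.mul_apply] using this

lemma young_nu {d : ℕ} (F G : E d → ℝ≥0∞) (hF : Measurable F) (hG : Measurable G) :
    nu (fun ξ => ∫⁻ η, F (ξ - η) * G η) ≤ (∫⁻ ζ, F ζ) * nu G := by
  unfold nu; exact young F G hF hG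

lemma young_nu' {d : ℕ} (F G : E d → ℝ≥0∞) (hF : Measurable F) (hG : Measurable G) :
    nu (fun ξ => ∫⁻ η, F (ξ - η) * G η) ≤ nu F * ∫⁻ η, G η := by
  unfold nu; exact young' F G hF hG

lemma smul_enorm {r : ℝ} (hr : 0 ≤ r) (z : ℂ) :
    ((‖r • z‖₊ : ℝ≥0∞)) = ENNReal.ofReal r * (‖z‖₊ : ℝ≥0∞) := by
  rw [← enorm_eq_nnnorm, ← enorm_eq_nnnorm, ← ofReal_norm_eq_enorm, ← ofReal_norm_eq_enorm, norm_smul, Real.norm_eq_abs,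
    abs_of_nonneg hr, ENNReal.ofReal_mul hr]

lemma eLp_eq {d : ℕ} (u : E d → ℂ) :
    eLpNorm u 2 volume = nu fun ξ => (‖u ξ‖₊ : ℝ≥0∞) := by
  rw [eLpNorm_eq_lintegral_rpow_enorm_toReal two_ne_zero ENNReal.ofNat_ne_top]
  unfold nu
  norm_num
  simp only [enorm_eq_nnnorm]

end Stmt7

open Stmt7

/-- Fourier-side boundedness of the conjugated multiplication
operator, with Sobolev correction of order `m`:
`‖⟨·⟩^m g‖_{L²} ≤ C (‖e^{τ⟨·⟩^σ}⟨·⟩^m f‖_{L²} ‖w‖_{L²} + ‖e^{τ⟨·⟩^σ} f‖_{L²} ‖⟨·⟩^m w‖_{L²})`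
for `g(ξ) = ∫ e^{τ⟨ξ⟩^σ − τ⟨η⟩^σ} f(ξ−η) w(η) dη`. -/
theorem stmt_7 (d : ℕ) (hd : 1 ≤ d) (σ τ m : ℝ)
    (hσ0 : 0 < σ) (hσ1 : σ < 1) (hτ : 0 < τ) (hm : 0 ≤ m) :
    ∃ C : ℝ, 0 < C ∧
      ∀ (f w : E d → ℂ), Measurable f → Measurable w →
        MemLp (fun ξ : E d => (Real.exp (τ * jap ξ ^ σ) * jap ξ ^ m) • f ξ) 2 volume →
        MemLp (fun ξ : E d => Real.exp (τ * jap ξ ^ σ) • f ξ) 2 volume →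
        MemLp (fun ξ : E d => jap ξ ^ m • w ξ) 2 volume →
        MemLp w 2 volume →
        eLpNorm (fun ξ : E d => jap ξ ^ m •
            ∫ η : E d, Real.exp (τ * jap ξ ^ σ - τ * jap η ^ σ) • (f (ξ - η) * w η)) 2 volume
          ≤ ENNReal.ofReal C *
              (eLpNorm (fun ξ : E d =>
                  (Real.exp (τ * jap ξ ^ σ) * jap ξ ^ m) • f ξ) 2 volume *
                eLpNorm w 2 volume +
               eLpNorm (fun ξ : E d => Real.exp (τ * jap ξ ^ σ) • f ξ) 2 volume *
                eLpNorm (fun ξ : E d => jap ξ ^ m • w ξ) 2 volume) := by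
  have h2σ : (2:ℝ) ^ σ < 2 := by
    have := Real.rpow_lt_rpow_of_exponent_lt (by norm_num : (1:ℝ) < 2) hσ1
    rwa [Real.rpow_one] at this
  set c : ℝ := τ * (2 - 2 ^ σ) with hcdef
  have hc : 0 < c := mul_pos hτ (by linarith)
  set K : ℝ≥0∞ := nu (fun ζ : E d =>
    ENNReal.ofReal (jap ζ ^ m * Real.exp (-(c * jap ζ ^ σ)))) with hKdef
  have hKtop : K ≠ ⊤ := by
    apply ENNReal.rpow_ne_top_of_nonneg (by norm_num)
    exact (decay_sq_finite hσ0 hm hc).ne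
  have h2m : (0:ℝ) < 2 ^ m := Real.rpow_pos_of_pos (by norm_num) m
  refine ⟨2 ^ m * (4 * K.toReal + 1), by positivity, ?_⟩
  intro f w hf hw _ _ _ _
  -- real weight measurability
  have hpm : Measurable fun ζ : E d => jap ζ ^ m :=
    (continuous_jap.rpow_const fun ζ => Or.inl (jap_pos ζ).ne').measurable
  have hjσ : Measurable fun ζ : E d => jap ζ ^ σ :=
    (continuous_jap.rpow_const fun ζ => Or.inl (jap_pos ζ).ne').measurable
  have hewt : Measurable fun ζ : E d => Real.exp (τ * jap ζ ^ σ) :=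
    Real.measurable_exp.comp (hjσ.const_mul τ)
  have hdec : Measurable fun ζ : E d => Real.exp (-(c * jap ζ ^ σ)) :=
    Real.measurable_exp.comp ((hjσ.const_mul c).neg)
  -- nonnegativity facts
  have hpm0 : ∀ ζ : E d, 0 ≤ jap ζ ^ m := fun ζ => Real.rpow_nonneg (jap_nonneg ζ) m
  have hpm1 : ∀ ζ : E d, 1 ≤ jap ζ ^ m := fun ζ => Real.one_le_rpow (one_le_jap ζ) hm
  -- the ENNReal-valued pieces
  set F1 : E d → ℝ≥0∞ := fun ζ =>
    ENNReal.ofReal (jap ζ ^ m * (Real.exp (τ * jap ζ ^ σ) * Real.exp (-(c * jap ζ ^ σ)))) * ‖f ζ‖₊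
    with hF1def
  set F2 : E d → ℝ≥0∞ := fun ζ =>
    ENNReal.ofReal (jap ζ ^ m * Real.exp (τ * jap ζ ^ σ)) * ‖f ζ‖₊ with hF2def
  set F3 : E d → ℝ≥0∞ := fun ζ =>
    ENNReal.ofReal (Real.exp (τ * jap ζ ^ σ) * Real.exp (-(c * jap ζ ^ σ))) * ‖f ζ‖₊ with hF3def
  set F4 : E d → ℝ≥0∞ := fun ζ =>
    ENNReal.ofReal (Real.exp (τ * jap ζ ^ σ)) * ‖f ζ‖₊ with hF4def
  set G1 : E d → ℝ≥0∞ := fun η => (‖w η‖₊ : ℝ≥0∞) with hG1def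
  set G2 : E d → ℝ≥0∞ := fun η => ENNReal.ofReal (Real.exp (-(c * jap η ^ σ))) * ‖w η‖₊ with hG2def
  set G3 : E d → ℝ≥0∞ := fun η => ENNReal.ofReal (jap η ^ m) * ‖w η‖₊ with hG3def
  set G4 : E d → ℝ≥0∞ := fun η =>
    ENNReal.ofReal (jap η ^ m * Real.exp (-(c * jap η ^ σ))) * ‖w η‖₊ with hG4def
  have hF1 : Measurable F1 := ((hpm.mul (hewt.mul hdec)).ennreal_ofReal).mul hf.enorm
  have hF2 : Measurable F2 := ((hpm.mul hewt).ennreal_ofReal).mul hf.enorm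
  have hF3 : Measurable F3 := ((hewt.mul hdec).ennreal_ofReal).mul hf.enorm
  have hF4 : Measurable F4 := (hewt.ennreal_ofReal).mul hf.enorm
  have hG1 : Measurable G1 := hw.enorm
  have hG2 : Measurable G2 := (hdec.ennreal_ofReal).mul hw.enorm
  have hG3 : Measurable G3 := (hpm.ennreal_ofReal).mul hw.enorm
  have hG4 : Measurable G4 := ((hpm.mul hdec).ennreal_ofReal).mul hw.enorm
  -- convolution pieces
  set C1 : E d → ℝ≥0∞ := fun ξ => ∫⁻ η, F1 (ξ - η) * G1 η with hC1def
  set C2 : E d → ℝ≥0∞ := fun ξ => ∫⁻ η, F2 (ξ - η) * G2 η with hC2def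
  set C3 : E d → ℝ≥0∞ := fun ξ => ∫⁻ η, F3 (ξ - η) * G3 η with hC3def
  set C4 : E d → ℝ≥0∞ := fun ξ => ∫⁻ η, F4 (ξ - η) * G4 η with hC4def
  have hconv : ∀ (F G : E d → ℝ≥0∞), Measurable F → Measurable G →
      Measurable fun ξ : E d => ∫⁻ η, F (ξ - η) * G η := by
    intro F G hF hG
    exact Measurable.lintegral_prod_right
      ((hF.comp (measurable_fst.sub measurable_snd)).mul (hG.comp measurable_snd))
  have hC1 : Measurable C1 := hconv F1 G1 hF1 hG1
  have hC2 : Measurable C2 := hconv F2 G2 hF2 hG2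
  have hC3 : Measurable C3 := hconv F3 G3 hF3 hG3
  have hC4 : Measurable C4 := hconv F4 G4 hF4 hG4
  -- eLpNorm identifications
  have hN1 : nu F2 = eLpNorm (fun ξ : E d =>
      (Real.exp (τ * jap ξ ^ σ) * jap ξ ^ m) • f ξ) 2 volume := by
    rw [eLp_eq]; apply nu_congr; intro ξ
    simp only [hF2def]
    rw [smul_enorm (mul_nonneg (Real.exp_nonneg _) (hpm0 ξ)), mul_comm (jap ξ ^ m)]
  have hN2 : nu F4 = eLpNorm (fun ξ : E d => Real.exp (τ * jap ξ ^ σ) • f ξ) 2 volume := by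
    rw [eLp_eq]; apply nu_congr; intro ξ
    simp only [hF4def]
    rw [smul_enorm (Real.exp_nonneg _)]
  have hNw : nu G1 = eLpNorm w 2 volume := (eLp_eq w).symm
  have hNmw : nu G3 = eLpNorm (fun ξ : E d => jap ξ ^ m • w ξ) 2 volume := by
    rw [eLp_eq]; apply nu_congr; intro ξ
    simp only [hG3def]
    rw [smul_enorm (hpm0 ξ)]
  -- Nw ≤ Nmw
  have hwmw : nu G1 ≤ nu G3 := by
    apply nu_mono; intro η
    simp only [hG1def, hG3def]
    conv_lhs => rw [← one_mul (‖w η‖₊ : ℝ≥0∞)]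
    apply mul_le_mul_left
    rw [← ENNReal.ofReal_one]
    exact ENNReal.ofReal_le_ofReal (hpm1 η)
  -- Cauchy-Schwarz bounds for the L¹ factors
  have hKdec : nu (fun ζ : E d => ENNReal.ofReal (Real.exp (-(c * jap ζ ^ σ)))) ≤ K := by
    rw [hKdef]; apply nu_mono; intro ζ
    apply ENNReal.ofReal_le_ofReal
    nlinarith [hpm1 ζ, Real.exp_pos (-(c * jap ζ ^ σ))]
  have hL1F1 : ∫⁻ ζ, F1 ζ ≤ K * nu F2 := by
    have hpt : ∀ ζ : E d, F1 ζ = ENNReal.ofReal (Real.exp (-(c * jap ζ ^ σ))) * F2 ζ := by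
      intro ζ
      simp only [hF1def, hF2def]
      have e : jap ζ ^ m * (Real.exp (τ * jap ζ ^ σ) * Real.exp (-(c * jap ζ ^ σ)))
          = Real.exp (-(c * jap ζ ^ σ)) * (jap ζ ^ m * Real.exp (τ * jap ζ ^ σ)) := by ring
      rw [e, ENNReal.ofReal_mul (Real.exp_nonneg _), mul_assoc]
    calc ∫⁻ ζ, F1 ζ = ∫⁻ ζ, ENNReal.ofReal (Real.exp (-(c * jap ζ ^ σ))) * F2 ζ :=
          lintegral_congr hpt
    _ ≤ nu (fun ζ : E d => ENNReal.ofReal (Real.exp (-(c * jap ζ ^ σ)))) * nu F2 :=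
          cs (hdec.ennreal_ofReal) hF2
    _ ≤ K * nu F2 := mul_le_mul_left hKdec _
  have hL1F3 : ∫⁻ ζ, F3 ζ ≤ K * nu F4 := by
    have hpt : ∀ ζ : E d, F3 ζ = ENNReal.ofReal (Real.exp (-(c * jap ζ ^ σ))) * F4 ζ := by
      intro ζ
      simp only [hF3def, hF4def]
      have e : Real.exp (τ * jap ζ ^ σ) * Real.exp (-(c * jap ζ ^ σ))
          = Real.exp (-(c * jap ζ ^ σ)) * Real.exp (τ * jap ζ ^ σ) := by ring
      rw [e, ENNReal.ofReal_mul (Real.exp_nonneg _), mul_assoc]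
    calc ∫⁻ ζ, F3 ζ = ∫⁻ ζ, ENNReal.ofReal (Real.exp (-(c * jap ζ ^ σ))) * F4 ζ :=
          lintegral_congr hpt
    _ ≤ nu (fun ζ : E d => ENNReal.ofReal (Real.exp (-(c * jap ζ ^ σ)))) * nu F4 :=
          cs (hdec.ennreal_ofReal) hF4
    _ ≤ K * nu F4 := mul_le_mul_left hKdec _
  have hL1G2 : ∫⁻ η, G2 η ≤ K * nu G1 := by
    calc ∫⁻ η, G2 η ≤ nu (fun η : E d => ENNReal.ofReal (Real.exp (-(c * jap η ^ σ)))) * nu G1 :=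
          cs (hdec.ennreal_ofReal) hG1
    _ ≤ K * nu G1 := mul_le_mul_left hKdec _
  have hL1G4 : ∫⁻ η, G4 η ≤ K * nu G1 := by
    calc ∫⁻ η, G4 η ≤ nu (fun η : E d =>
          ENNReal.ofReal (jap η ^ m * Real.exp (-(c * jap η ^ σ)))) * nu G1 :=
          cs ((hpm.mul hdec).ennreal_ofReal) hG1
    _ = K * nu G1 := by rw [hKdef]
  -- pointwise kernel bound
  have stepA : ∀ ξ : E d,
      ENNReal.ofReal (jap ξ ^ m) *
        (‖∫ η : E d, Real.exp (τ * jap ξ ^ σ - τ * jap η ^ σ) • (f (ξ - η) * w η)‖₊ : ℝ≥0∞)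
      ≤ ENNReal.ofReal ((2:ℝ) ^ m) * (C1 ξ + C2 ξ + C3 ξ + C4 ξ) := by
    intro ξ
    have hptw : ∀ η : E d,
        ENNReal.ofReal (jap ξ ^ m) *
          (‖Real.exp (τ * jap ξ ^ σ - τ * jap η ^ σ) • (f (ξ - η) * w η)‖₊ : ℝ≥0∞)
        ≤ ENNReal.ofReal ((2:ℝ) ^ m) *
            (F1 (ξ - η) * G1 η + F2 (ξ - η) * G2 η + F3 (ξ - η) * G3 η + F4 (ξ - η) * G4 η) := by
      intro η
      have hA1 : 1 ≤ jap (ξ - η) := one_le_jap _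
      have hB1 : 1 ≤ jap η := one_le_jap _
      have hS1 : 1 ≤ jap ξ := one_le_jap _
      have hSAB : jap ξ ≤ jap (ξ - η) + jap η := by
        have := jap_triangle (ξ - η) η
        rwa [sub_add_cancel] at this
      have hker := kernel_ineq hσ0 hσ1 hτ hm hA1 hB1 hS1 hSAB
      rw [← hcdef] at hker
      set A := jap (ξ - η)
      set B := jap η
      have ht1 : (0:ℝ) ≤ A ^ m * (Real.exp (τ * A ^ σ) * Real.exp (-(c * A ^ σ))) := by
        have := hpm0 (ξ - η); positivity
      have ht2 : (0:ℝ) ≤ A ^ m * Real.exp (τ * A ^ σ) := by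
        have := hpm0 (ξ - η); positivity
      have ht2' : (0:ℝ) ≤ A ^ m * Real.exp (τ * A ^ σ) * Real.exp (-(c * B ^ σ)) := by
        positivity
      have ht3' : (0:ℝ) ≤ Real.exp (τ * A ^ σ) * Real.exp (-(c * A ^ σ)) * B ^ m := by
        have := hpm0 η; positivity
      have ht4' : (0:ℝ) ≤ Real.exp (τ * A ^ σ) * (B ^ m * Real.exp (-(c * B ^ σ))) := by
        have := hpm0 η; positivity
      rw [smul_enorm (Real.exp_nonneg _)]
      have hnm : (‖f (ξ - η) * w η‖₊ : ℝ≥0∞) = (‖f (ξ - η)‖₊ : ℝ≥0∞) * (‖w η‖₊ : ℝ≥0∞) := by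
        rw [nnnorm_mul]; push_cast; ring
      rw [hnm, ← mul_assoc, ← ENNReal.ofReal_mul (hpm0 ξ)]
      calc ENNReal.ofReal (jap ξ ^ m * Real.exp (τ * jap ξ ^ σ - τ * B ^ σ)) *
            ((‖f (ξ - η)‖₊ : ℝ≥0∞) * (‖w η‖₊ : ℝ≥0∞))
          ≤ ENNReal.ofReal ((2:ℝ) ^ m *
              (A ^ m * (Real.exp (τ * A ^ σ) * Real.exp (-(c * A ^ σ)))
              + A ^ m * Real.exp (τ * A ^ σ) * Real.exp (-(c * B ^ σ))
              + Real.exp (τ * A ^ σ) * Real.exp (-(c * A ^ σ)) * B ^ m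
              + Real.exp (τ * A ^ σ) * (B ^ m * Real.exp (-(c * B ^ σ))))) *
            ((‖f (ξ - η)‖₊ : ℝ≥0∞) * (‖w η‖₊ : ℝ≥0∞)) :=
            mul_le_mul_left (ENNReal.ofReal_le_ofReal hker) _
      _ = ENNReal.ofReal ((2:ℝ) ^ m) *
            (F1 (ξ - η) * G1 η + F2 (ξ - η) * G2 η + F3 (ξ - η) * G3 η + F4 (ξ - η) * G4 η) := by
          rw [ENNReal.ofReal_mul h2m.le,
            ENNReal.ofReal_add (by linarith) ht4',
            ENNReal.ofReal_add (by linarith) ht3',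
            ENNReal.ofReal_add ht1 ht2',
            ENNReal.ofReal_mul ht2,
            ENNReal.ofReal_mul (Real.exp_nonneg _),
            ENNReal.ofReal_mul (mul_nonneg (Real.exp_nonneg _) (Real.exp_nonneg _))]
          simp only [hF1def, hF2def, hF3def, hF4def, hG1def, hG2def, hG3def, hG4def]
          ring
    calc ENNReal.ofReal (jap ξ ^ m) * (‖∫ η : E d,
            Real.exp (τ * jap ξ ^ σ - τ * jap η ^ σ) • (f (ξ - η) * w η)‖₊ : ℝ≥0∞)
        ≤ ENNReal.ofReal (jap ξ ^ m) * ∫⁻ η,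
            (‖Real.exp (τ * jap ξ ^ σ - τ * jap η ^ σ) • (f (ξ - η) * w η)‖₊ : ℝ≥0∞) :=
          mul_le_mul_right (enorm_integral_le_lintegral_enorm _) _
    _ = ∫⁻ η, ENNReal.ofReal (jap ξ ^ m) *
            (‖Real.exp (τ * jap ξ ^ σ - τ * jap η ^ σ) • (f (ξ - η) * w η)‖₊ : ℝ≥0∞) :=
          (lintegral_const_mul' _ _ ENNReal.ofReal_ne_top).symm
    _ ≤ ∫⁻ η, ENNReal.ofReal ((2:ℝ) ^ m) *
            (F1 (ξ - η) * G1 η + F2 (ξ - η) * G2 η + F3 (ξ - η) * G3 η + F4 (ξ - η) * G4 η) :=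
          lintegral_mono hptw
    _ = ENNReal.ofReal ((2:ℝ) ^ m) * (C1 ξ + C2 ξ + C3 ξ + C4 ξ) := by
        rw [lintegral_const_mul' _ _ ENNReal.ofReal_ne_top]
        congr 1
        have m1 : Measurable fun η : E d => F1 (ξ - η) * G1 η :=
          (hF1.comp (measurable_const.sub measurable_id)).mul hG1
        have m2 : Measurable fun η : E d => F2 (ξ - η) * G2 η :=
          (hF2.comp (measurable_const.sub measurable_id)).mul hG2
        have m3 : Measurable fun η : E d => F3 (ξ - η) * G3 η :=
          (hF3.comp (measurable_const.sub measurable_id)).mul hG3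
        simp only [hC1def, hC2def, hC3def, hC4def]
        rw [lintegral_add_left (f := fun η => F1 (ξ - η) * G1 η + F2 (ξ - η) * G2 η + F3 (ξ - η) * G3 η) ((m1.add m2).add m3),
          lintegral_add_left (f := fun η => F1 (ξ - η) * G1 η + F2 (ξ - η) * G2 η) (m1.add m2),
          lintegral_add_left m1]
  -- assemble everything
  rw [eLp_eq, ← hN1, ← hN2, ← hNw, ← hNmw]
  set T : ℝ≥0∞ := nu F2 * nu G1 + nu F4 * nu G3 with hTdef
  have b1 : nu C1 ≤ K * (nu F2 * nu G1) := by
    rw [hC1def]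
    calc nu (fun ξ : E d => ∫⁻ η, F1 (ξ - η) * G1 η) ≤ (∫⁻ ζ, F1 ζ) * nu G1 :=
          young_nu F1 G1 hF1 hG1
    _ ≤ (K * nu F2) * nu G1 := mul_le_mul_left hL1F1 _
    _ = K * (nu F2 * nu G1) := mul_assoc _ _ _
  have b2 : nu C2 ≤ K * (nu F2 * nu G1) := by
    rw [hC2def]
    calc nu (fun ξ : E d => ∫⁻ η, F2 (ξ - η) * G2 η) ≤ nu F2 * ∫⁻ η, G2 η :=
          young_nu' F2 G2 hF2 hG2
    _ ≤ nu F2 * (K * nu G1) := mul_le_mul_right hL1G2 _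
    _ = K * (nu F2 * nu G1) := by ring
  have b3 : nu C3 ≤ K * (nu F4 * nu G3) := by
    rw [hC3def]
    calc nu (fun ξ : E d => ∫⁻ η, F3 (ξ - η) * G3 η) ≤ (∫⁻ ζ, F3 ζ) * nu G3 :=
          young_nu F3 G3 hF3 hG3
    _ ≤ (K * nu F4) * nu G3 := mul_le_mul_left hL1F3 _
    _ = K * (nu F4 * nu G3) := mul_assoc _ _ _
  have b4 : nu C4 ≤ K * (nu F4 * nu G3) := by
    rw [hC4def]
    calc nu (fun ξ : E d => ∫⁻ η, F4 (ξ - η) * G4 η) ≤ nu F4 * ∫⁻ η, G4 η :=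
          young_nu' F4 G4 hF4 hG4
    _ ≤ nu F4 * (K * nu G1) := mul_le_mul_right hL1G4 _
    _ ≤ nu F4 * (K * nu G3) := mul_le_mul_right (mul_le_mul_right hwmw _) _
    _ = K * (nu F4 * nu G3) := by ring
  have hsum : nu C1 + nu C2 + nu C3 + nu C4 ≤ 4 * (K * T) := by
    have e1 : nu C1 ≤ K * T := b1.trans (mul_le_mul_right le_self_add _)
    have e2 : nu C2 ≤ K * T := b2.trans (mul_le_mul_right le_self_add _)
    have e3 : nu C3 ≤ K * T := b3.trans (mul_le_mul_right le_add_self _)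
    have e4 : nu C4 ≤ K * T := b4.trans (mul_le_mul_right le_add_self _)
    calc nu C1 + nu C2 + nu C3 + nu C4 ≤ K * T + K * T + K * T + K * T :=
          add_le_add (add_le_add (add_le_add e1 e2) e3) e4
    _ = 4 * (K * T) := by ring
  have hCge : ENNReal.ofReal ((2:ℝ) ^ m) * (4 * K) ≤
      ENNReal.ofReal (2 ^ m * (4 * K.toReal + 1)) := by
    rw [ENNReal.ofReal_mul h2m.le]
    apply mul_le_mul_right
    have h4K : (4:ℝ≥0∞) * K = ENNReal.ofReal (4 * K.toReal) := by
      rw [ENNReal.ofReal_mul (by norm_num : (0:ℝ) ≤ 4), ENNReal.ofReal_toReal hKtop]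
      norm_num
    rw [h4K]
    exact ENNReal.ofReal_le_ofReal (by linarith [ENNReal.toReal_nonneg (a := K)])
  calc nu (fun ξ : E d => (‖jap ξ ^ m •
          ∫ η : E d, Real.exp (τ * jap ξ ^ σ - τ * jap η ^ σ) • (f (ξ - η) * w η)‖₊ : ℝ≥0∞))
      = nu (fun ξ : E d => ENNReal.ofReal (jap ξ ^ m) *
          (‖∫ η : E d, Real.exp (τ * jap ξ ^ σ - τ * jap η ^ σ) • (f (ξ - η) * w η)‖₊ : ℝ≥0∞)) :=
        nu_congr fun ξ => smul_enorm (hpm0 ξ) _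
  _ ≤ nu (fun ξ : E d => ENNReal.ofReal ((2:ℝ) ^ m) * (C1 ξ + C2 ξ + C3 ξ + C4 ξ)) :=
        nu_mono stepA
  _ = ENNReal.ofReal ((2:ℝ) ^ m) * nu (fun ξ : E d => C1 ξ + C2 ξ + C3 ξ + C4 ξ) :=
        nu_const_mul _ ENNReal.ofReal_ne_top _
  _ ≤ ENNReal.ofReal ((2:ℝ) ^ m) * (nu C1 + nu C2 + nu C3 + nu C4) :=
        mul_le_mul_right (nu_add4 hC1 hC2 hC3 hC4) _
  _ ≤ ENNReal.ofReal ((2:ℝ) ^ m) * (4 * (K * T)) := mul_le_mul_right hsum _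
  _ = (ENNReal.ofReal ((2:ℝ) ^ m) * (4 * K)) * T := by ring
  _ ≤ ENNReal.ofReal (2 ^ m * (4 * K.toReal + 1)) * T := mul_le_mul_left hCge _
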